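/- Let m ≥ 1 and write m + 1 = s(s+1)/2 + d with 0 ≤ d ≤ s. Then the minimal a-value for type ²A_m, a_min = s(s²−1)/6 + d(2s+1−d)/2, satisfies a_min ≥ (√2/3)·m^{3/2} − 2m for all m, i.e., the a-values of cuspidal unipotent classes grow like c·m^{3/2} with c = √2/3. -/
import Mathlib


/-- Writing `m + 1 = s(s+1)/2 + d` with `0 ≤ d ≤ s`, the minimal `a`-value for type
`²A_m`, namely `s(s²−1)/6 + d(2s+1−d)/2`, satisfies
`a_min ≥ (√2/3)·m^{3/2} − 2m`. -/
theorem stmt6 (m s d : ℕ) (hm : 1 ≤ m) (hd : d ≤ s)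
    (hdecomp : m + 1 = s * (s + 1) / 2 + d) :
    (s : ℝ) * ((s : ℝ) ^ 2 - 1) / 6 + (d : ℝ) * (2 * (s : ℝ) + 1 - (d : ℝ)) / 2 ≥
      Real.sqrt 2 / 3 * (m : ℝ) ^ ((3 : ℝ) / 2) - 2 * (m : ℝ) := by
  have hs1 : 1 ≤ s := by
    rcases Nat.eq_zero_or_pos s with h | h
    · exfalso; subst h; omega
    · exact h
  have hev : s * (s + 1) / 2 * 2 = s * (s + 1) :=
    Nat.div_mul_cancel (Nat.even_mul_succ_self s).two_dvd
  have hnat : 2 * (m + 1) = s * (s + 1) + 2 * d := by omega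
  have hR : 2 * ((m : ℝ) + 1) = (s : ℝ) * ((s : ℝ) + 1) + 2 * (d : ℝ) := by
    exact_mod_cast congrArg (fun n : ℕ => (n : ℝ)) hnat
  have hM1 : (1 : ℝ) ≤ (m : ℝ) := by exact_mod_cast hm
  have hS1 : (1 : ℝ) ≤ (s : ℝ) := by exact_mod_cast hs1
  have hD0 : (0 : ℝ) ≤ (d : ℝ) := Nat.cast_nonneg d
  have hDS : (d : ℝ) ≤ (s : ℝ) := by exact_mod_cast hd
  have hsqrt : Real.sqrt 2 * Real.sqrt (m : ℝ) ≤ (s : ℝ) + 2 := by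
    rw [← Real.sqrt_mul (by norm_num)]
    have h2 : Real.sqrt (2 * (m : ℝ)) ≤ Real.sqrt (((s : ℝ) + 2) ^ 2) := by
      apply Real.sqrt_le_sqrt; nlinarith
    rwa [Real.sqrt_sq (by linarith)] at h2
  have hrpow : (m : ℝ) ^ ((3 : ℝ) / 2) = (m : ℝ) * Real.sqrt (m : ℝ) := by
    rw [show (3 : ℝ) / 2 = 1 + 1 / 2 by norm_num, Real.rpow_add (by linarith),
      Real.rpow_one, ← Real.sqrt_eq_rpow]
  rw [hrpow]
  have hsm : (0 : ℝ) ≤ Real.sqrt (m : ℝ) := Real.sqrt_nonneg _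
  nlinarith [mul_le_mul_of_nonneg_left hsqrt (by linarith : (0 : ℝ) ≤ (m : ℝ)),
    mul_nonneg hD0 (sub_nonneg.2 hDS),
    mul_nonneg (sub_nonneg.2 hS1) (by linarith : (0 : ℝ) ≤ 3 * (s : ℝ) + 8)]
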